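/- Let K be an algebraically closed field with char K ≠ 2, and let ε ∈ K satisfy ε² = −1. Let Γ = K⟨α,β⟩/(α², β², αβ − βα) be the quotient of the free algebra on two generators by the ideal generated by α², β², and αβ−βα, and let Λ = K⟨a,b⟩/(ab, ba, a² − b²). Then the map α ↦ a + εb, β ↦ a − εb extends to a K-algebra isomorphism Γ ≅ Λ. -/

import Mathlib

open FreeAlgebra

/-- Relations of `Γ(1,1;1) = K⟨α,β⟩/(α², β², αβ - βα)`. -/
def gammaRel (K : Type*) [Field K] : FreeAlgebra K (Fin 2) → FreeAlgebra K (Fin 2) → Prop :=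
  fun x y =>
    (x = ι K 0 * ι K 0 ∧ y = 0) ∨ (x = ι K 1 * ι K 1 ∧ y = 0) ∨
    (x = ι K 0 * ι K 1 ∧ y = ι K 1 * ι K 0)

/-- Relations of `Λ(1,1;2,2) = K⟨a,b⟩/(ab, ba, a² - b²)`. -/
def lambdaRel (K : Type*) [Field K] : FreeAlgebra K (Fin 2) → FreeAlgebra K (Fin 2) → Prop :=
  fun x y =>
    (x = ι K 0 * ι K 1 ∧ y = 0) ∨ (x = ι K 1 * ι K 0 ∧ y = 0) ∨
    (x = ι K 0 * ι K 0 ∧ y = ι K 1 * ι K 1)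

/-- For `K` algebraically closed with `char K ≠ 2` and `ε² = -1`, the map
`α ↦ a + εb, β ↦ a - εb` extends to an algebra isomorphism
`K⟨α,β⟩/(α², β², αβ-βα) ≅ K⟨a,b⟩/(ab, ba, a²-b²)`. -/
theorem stmt11 (K : Type*) [Field K] [IsAlgClosed K] (hchar : ringChar K ≠ 2)
    (ε : K) (hε : ε ^ 2 = -1) :
    ∃ φ : RingQuot (gammaRel K) ≃ₐ[K] RingQuot (lambdaRel K),
      φ (RingQuot.mkAlgHom K (gammaRel K) (ι K 0)) =
        RingQuot.mkAlgHom K (lambdaRel K) (ι K 0) +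
          ε • RingQuot.mkAlgHom K (lambdaRel K) (ι K 1) ∧
      φ (RingQuot.mkAlgHom K (gammaRel K) (ι K 1)) =
        RingQuot.mkAlgHom K (lambdaRel K) (ι K 0) -
          ε • RingQuot.mkAlgHom K (lambdaRel K) (ι K 1) := by
  have h2 : (2 : K) ≠ 0 := Ring.two_ne_zero hchar
  have hε0 : ε ≠ 0 := by
    intro h; rw [h] at hε; simp at hε
  have hεε : ε * ε = -1 := by rw [← sq]; exact hε
  set A := RingQuot.mkAlgHom K (lambdaRel K) (ι K 0) with hA
  set B := RingQuot.mkAlgHom K (lambdaRel K) (ι K 1) with hB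
  set X := RingQuot.mkAlgHom K (gammaRel K) (ι K 0) with hX
  set Y := RingQuot.mkAlgHom K (gammaRel K) (ι K 1) with hY
  have hAB : A * B = 0 := by
    have := RingQuot.mkAlgHom_rel K (s := lambdaRel K)
      (x := ι K 0 * ι K 1) (y := 0) (Or.inl ⟨rfl, rfl⟩)
    simpa [map_mul] using this
  have hBA : B * A = 0 := by
    have := RingQuot.mkAlgHom_rel K (s := lambdaRel K)
      (x := ι K 1 * ι K 0) (y := 0) (Or.inr (Or.inl ⟨rfl, rfl⟩))
    simpa [map_mul] using this
  have hA2 : A * A = B * B := by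
    have := RingQuot.mkAlgHom_rel K (s := lambdaRel K)
      (x := ι K 0 * ι K 0) (y := ι K 1 * ι K 1) (Or.inr (Or.inr ⟨rfl, rfl⟩))
    simpa [map_mul] using this
  have hX2 : X * X = 0 := by
    have := RingQuot.mkAlgHom_rel K (s := gammaRel K)
      (x := ι K 0 * ι K 0) (y := 0) (Or.inl ⟨rfl, rfl⟩)
    simpa [map_mul] using this
  have hY2 : Y * Y = 0 := by
    have := RingQuot.mkAlgHom_rel K (s := gammaRel K)
      (x := ι K 1 * ι K 1) (y := 0) (Or.inr (Or.inl ⟨rfl, rfl⟩))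
    simpa [map_mul] using this
  have hXY : X * Y = Y * X := by
    have := RingQuot.mkAlgHom_rel K (s := gammaRel K)
      (x := ι K 0 * ι K 1) (y := ι K 1 * ι K 0) (Or.inr (Or.inr ⟨rfl, rfl⟩))
    simpa [map_mul] using this
  -- forward map on the free algebra
  let f : FreeAlgebra K (Fin 2) →ₐ[K] RingQuot (lambdaRel K) :=
    FreeAlgebra.lift K (fun i => if i = 0 then A + ε • B else A - ε • B)
  have hf0 : f (ι K 0) = A + ε • B := by simp [f]
  have hf1 : f (ι K 1) = A - ε • B := by simp [f]
  have hfrel : ∀ ⦃x y : FreeAlgebra K (Fin 2)⦄, gammaRel K x y → f x = f y := by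
    rintro x y (⟨rfl, rfl⟩ | ⟨rfl, rfl⟩ | ⟨rfl, rfl⟩) <;>
      simp only [map_mul, map_zero, hf0, hf1] <;>
      simp only [mul_add, add_mul, mul_sub, sub_mul, smul_mul_assoc, mul_smul_comm,
        hAB, hBA, smul_zero, zero_add, add_zero, zero_sub, sub_zero, smul_smul, hεε,
        neg_one_smul, smul_neg, hA2] <;>
      abel
  -- reverse map on the free algebra
  let g : FreeAlgebra K (Fin 2) →ₐ[K] RingQuot (gammaRel K) :=
    FreeAlgebra.lift K
      (fun i => if i = 0 then (2 : K)⁻¹ • (X + Y) else (2 * ε)⁻¹ • (X - Y))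
  have hg0 : g (ι K 0) = (2 : K)⁻¹ • (X + Y) := by simp [g]
  have hg1 : g (ι K 1) = (2 * ε)⁻¹ • (X - Y) := by simp [g]
  have hplusminus : (X + Y) * (X - Y) = 0 := by
    simp only [mul_sub, add_mul]
    rw [hX2, hY2, hXY]; abel
  have hminusplus : (X - Y) * (X + Y) = 0 := by
    simp only [mul_add, sub_mul]
    rw [hX2, hY2, hXY]; abel
  have hgrel : ∀ ⦃x y : FreeAlgebra K (Fin 2)⦄, lambdaRel K x y → g x = g y := by
    rintro x y (⟨rfl, rfl⟩ | ⟨rfl, rfl⟩ | ⟨rfl, rfl⟩) <;>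
      simp only [map_mul, map_zero, hg0, hg1, smul_mul_assoc, mul_smul_comm, smul_smul]
    · rw [hplusminus, smul_zero]
    · rw [hminusplus, smul_zero]
    · have e1 : (X + Y) * (X + Y) = X * Y + X * Y := by
        simp only [mul_add, add_mul]; rw [hX2, hY2, hXY]; abel
      have e2 : (X - Y) * (X - Y) = -(X * Y) - X * Y := by
        simp only [mul_sub, sub_mul]; rw [hX2, hY2, hXY]; abel
      rw [e1, e2]
      have c1 : (2 : K)⁻¹ * (2 : K)⁻¹ = (4 : K)⁻¹ := by
        rw [← mul_inv]; norm_num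
      have c2 : (2 * ε)⁻¹ * (2 * ε)⁻¹ = -(4 : K)⁻¹ := by
        rw [← mul_inv]
        have h4 : (2 * ε) * (2 * ε) = -4 := by
          have h4' : (2 * ε) * (2 * ε) = 4 * (ε * ε) := by ring
          rw [h4', hεε]; ring
        rw [h4, inv_neg]
      rw [c1, c2]
      simp only [smul_add, smul_sub, smul_neg, neg_smul, neg_neg]
      abel
  let Φ : RingQuot (gammaRel K) →ₐ[K] RingQuot (lambdaRel K) :=
    RingQuot.liftAlgHom K ⟨f, hfrel⟩
  let Ψ : RingQuot (lambdaRel K) →ₐ[K] RingQuot (gammaRel K) :=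
    RingQuot.liftAlgHom K ⟨g, hgrel⟩
  have hΦX : Φ X = A + ε • B := by
    rw [hX]; rw [RingQuot.liftAlgHom_mkAlgHom_apply]; exact hf0
  have hΦY : Φ Y = A - ε • B := by
    rw [hY]; rw [RingQuot.liftAlgHom_mkAlgHom_apply]; exact hf1
  have hΨA : Ψ A = (2 : K)⁻¹ • (X + Y) := by
    rw [hA]; rw [RingQuot.liftAlgHom_mkAlgHom_apply]; exact hg0
  have hΨB : Ψ B = (2 * ε)⁻¹ • (X - Y) := by
    rw [hB]; rw [RingQuot.liftAlgHom_mkAlgHom_apply]; exact hg1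
  have hc1 : Φ (Ψ A) = A := by
    rw [hΨA, map_smul, map_add, hΦX, hΦY]
    match_scalars <;> field_simp <;> ring
  have hc2 : Φ (Ψ B) = B := by
    rw [hΨB, map_smul, map_sub, hΦX, hΦY]
    match_scalars <;> field_simp <;> ring
  have hc3 : Ψ (Φ X) = X := by
    rw [hΦX, map_add, map_smul, hΨA, hΨB]
    match_scalars <;> field_simp <;> ring
  have hc4 : Ψ (Φ Y) = Y := by
    rw [hΦY, map_sub, map_smul, hΨA, hΨB]
    match_scalars <;> field_simp <;> ring
  have hΦΨ : Φ.comp Ψ = AlgHom.id K _ := by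
    apply RingQuot.ringQuot_ext'
    apply FreeAlgebra.hom_ext
    funext i
    fin_cases i
    · simpa [AlgHom.comp_apply, ← hA] using hc1
    · simpa [AlgHom.comp_apply, ← hB] using hc2
  have hΨΦ : Ψ.comp Φ = AlgHom.id K _ := by
    apply RingQuot.ringQuot_ext'
    apply FreeAlgebra.hom_ext
    funext i
    fin_cases i
    · simpa [AlgHom.comp_apply, ← hX] using hc3
    · simpa [AlgHom.comp_apply, ← hY] using hc4
  refine ⟨AlgEquiv.ofAlgHom Φ Ψ hΦΨ hΨΦ, ?_, ?_⟩
  · simpa [AlgEquiv.ofAlgHom_apply, ← hX, ← hA, ← hB] using hΦX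
  · simpa [AlgEquiv.ofAlgHom_apply, ← hX, ← hY, ← hA, ← hB] using hΦY
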